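/- Let r be a positive real number such that 1, r, r², r³ are linearly independent over ℚ. Let Λ ⊂ ℂ² be the additive subgroup generated by the four vectors (1,0), (0,1), (i·r³, r), (r, i). Then for every complex line L = ℂ·v (v ∈ ℂ², v ≠ 0), the intersection L ∩ Λ is a cyclic group: there exists λ₀ ∈ L ∩ Λ with L ∩ Λ = ℤ·λ₀. -/

import Mathlib

open Complex

set_option maxHeartbeats 1000000

private lemma rep4 (g1 g2 g3 g4 : ℂ × ℂ) (x : ℂ × ℂ)
    (hx : x ∈ AddSubgroup.closure {g1, g2, g3, g4}) :
    ∃ a b c d : ℤ, x = a • g1 + b • g2 + c • g3 + d • g4 := by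
  induction hx using AddSubgroup.closure_induction with
  | mem z hz =>
    rcases hz with rfl | rfl | rfl | rfl
    · exact ⟨1, 0, 0, 0, by simp⟩
    · exact ⟨0, 1, 0, 0, by simp⟩
    · exact ⟨0, 0, 1, 0, by simp⟩
    · exact ⟨0, 0, 0, 1, by simp⟩
  | zero => exact ⟨0, 0, 0, 0, by simp⟩
  | add x y _ _ hx hy =>
    obtain ⟨a, b, c, d, rfl⟩ := hx; obtain ⟨a', b', c', d', rfl⟩ := hy
    exact ⟨a + a', b + b', c + c', d + d', by push_cast [add_smul]; abel⟩
  | neg x _ hx =>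
    obtain ⟨a, b, c, d, rfl⟩ := hx
    exact ⟨-a, -b, -c, -d, by push_cast [neg_smul]; abel⟩

private lemma minors4 (a₁ a₂ a₃ a₄ b₁ b₂ b₃ b₄ : ℤ)
    (h12 : a₁*b₂ = a₂*b₁) (h14 : a₁*b₄ = a₄*b₁) (h23 : a₂*b₃ = a₃*b₂)
    (h34 : a₃*b₄ = a₄*b₃) (hc : a₁*b₃ + a₄*b₂ = a₃*b₁ + a₂*b₄) :
    a₁*b₃ = a₃*b₁ ∧ a₂*b₄ = a₄*b₂ := by
  have e2 : a₂ * (a₁*b₃ - a₃*b₁) = 0 := by linear_combination a₁ * h23 + a₃ * h12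
  have e2' : b₂ * (a₁*b₃ - a₃*b₁) = 0 := by linear_combination b₃ * h12 + b₁ * h23
  have e4 : a₄ * (a₁*b₃ - a₃*b₁) = 0 := by linear_combination (-a₁) * h34 + a₃ * h14
  have e4' : b₄ * (a₁*b₃ - a₃*b₁) = 0 := by linear_combination b₃ * h14 - b₁ * h34
  have hK : (a₁*b₃ - a₃*b₁) * (a₂^2 + b₂^2 + a₄^2 + b₄^2) = 0 := by
    linear_combination a₂ * e2 + b₂ * e2' + a₄ * e4 + b₄ * e4'
  rcases mul_eq_zero.mp hK with hm | hK
  · exact ⟨by linarith, by linarith⟩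
  · have h2 : a₂ = 0 := by nlinarith [sq_nonneg a₂, sq_nonneg b₂, sq_nonneg a₄, sq_nonneg b₄]
    have h2' : b₂ = 0 := by nlinarith [sq_nonneg a₂, sq_nonneg b₂, sq_nonneg a₄, sq_nonneg b₄]
    have h4 : a₄ = 0 := by nlinarith [sq_nonneg a₂, sq_nonneg b₂, sq_nonneg a₄, sq_nonneg b₄]
    have h4' : b₄ = 0 := by nlinarith [sq_nonneg a₂, sq_nonneg b₂, sq_nonneg a₄, sq_nonneg b₄]
    subst h2 h2' h4 h4'
    exact ⟨by linarith, by ring⟩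

private lemma reim0 (P Q : ℝ) (h : (P:ℂ) + (Q:ℂ)*I = 0) : P = 0 ∧ Q = 0 := by
  constructor
  · simpa using congrArg Complex.re h
  · simpa using congrArg Complex.im h

private lemma cross_minors (r : ℝ)
    (hind : ∀ q0 q1 q2 q3 : ℚ,
      (q0 : ℝ) + q1 * r + q2 * r ^ 2 + q3 * r ^ 3 = 0 →
      q0 = 0 ∧ q1 = 0 ∧ q2 = 0 ∧ q3 = 0)
    (a₁ a₂ a₃ a₄ b₁ b₂ b₃ b₄ : ℤ)
    (hE : ((b₁:ℂ) + b₄*(r:ℂ) + b₃*(r:ℂ)^3*I) * ((a₂:ℂ) + a₃*(r:ℂ) + a₄*I)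
        - ((b₂:ℂ) + b₃*(r:ℂ) + b₄*I) * ((a₁:ℂ) + a₄*(r:ℂ) + a₃*(r:ℂ)^3*I) = 0) :
    a₁*b₂ = a₂*b₁ ∧ a₁*b₃ = a₃*b₁ ∧ a₁*b₄ = a₄*b₁ ∧ a₂*b₃ = a₃*b₂ ∧
      a₂*b₄ = a₄*b₂ ∧ a₃*b₄ = a₄*b₃ := by
  have hPQ : ((((a₂*b₁ - a₁*b₂ : ℤ) + (a₃*b₁ + a₂*b₄ - a₁*b₃ - a₄*b₂)*r
      + (a₃*b₄ - a₄*b₃)*r^2 + (a₃*b₄ - a₄*b₃)*r^3 : ℝ)) : ℂ)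
      + ((((a₄*b₁ - a₁*b₄ : ℤ) + (a₂*b₃ - a₃*b₂)*r^3 : ℝ)) : ℂ) * I = 0 := by
    push_cast
    linear_combination hE + (((a₃:ℂ)*b₄ - (a₄:ℂ)*b₃)*(r:ℂ)^3) * Complex.I_sq
  obtain ⟨hP, hQ⟩ := reim0 _ _ hPQ
  push_cast at hP hQ
  have H1 := hind ((a₂*b₁ - a₁*b₂ : ℤ) : ℚ) ((a₃*b₁ + a₂*b₄ - a₁*b₃ - a₄*b₂ : ℤ) : ℚ)
      ((a₃*b₄ - a₄*b₃ : ℤ) : ℚ) ((a₃*b₄ - a₄*b₃ : ℤ) : ℚ) (by push_cast; linear_combination hP)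
  have H2 := hind ((a₄*b₁ - a₁*b₄ : ℤ) : ℚ) 0 0 ((a₂*b₃ - a₃*b₂ : ℤ) : ℚ)
      (by push_cast; linear_combination hQ)
  obtain ⟨u1, u2, u3, -⟩ := H1
  obtain ⟨w1, -, -, w4⟩ := H2
  have u1' : a₂*b₁ - a₁*b₂ = 0 := by exact_mod_cast u1
  have u2' : a₃*b₁ + a₂*b₄ - a₁*b₃ - a₄*b₂ = 0 := by exact_mod_cast u2
  have u3' : a₃*b₄ - a₄*b₃ = 0 := by exact_mod_cast u3
  have w1' : a₄*b₁ - a₁*b₄ = 0 := by exact_mod_cast w1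
  have w4' : a₂*b₃ - a₃*b₂ = 0 := by exact_mod_cast w4
  obtain ⟨m13, m24⟩ := minors4 a₁ a₂ a₃ a₄ b₁ b₂ b₃ b₄
    (by linarith) (by linarith) (by linarith) (by linarith) (by linarith)
  exact ⟨by linarith, m13, by linarith, by linarith, m24, by linarith⟩

theorem stmt_4 (r : ℝ) (hr : 0 < r)
    (hind : ∀ q0 q1 q2 q3 : ℚ,
      (q0 : ℝ) + q1 * r + q2 * r ^ 2 + q3 * r ^ 3 = 0 →
      q0 = 0 ∧ q1 = 0 ∧ q2 = 0 ∧ q3 = 0)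
    (Λ : AddSubgroup (ℂ × ℂ))
    (hΛ : Λ = AddSubgroup.closure
      {((1 : ℂ), (0 : ℂ)), ((0 : ℂ), (1 : ℂ)),
       ((I * (r : ℂ) ^ 3, (r : ℂ))), (((r : ℂ), I))})
    (v : ℂ × ℂ) (hv : v ≠ 0) :
    ∃ lam0 : ℂ × ℂ, lam0 ∈ Λ ∧ (∃ ζ : ℂ, lam0 = ζ • v) ∧
      {x : ℂ × ℂ | x ∈ Λ ∧ ∃ ζ : ℂ, x = ζ • v} =
        Set.range (fun n : ℤ => n • lam0) := by
  by_cases htriv : ∀ x : ℂ × ℂ, x ∈ Λ → (∃ ζ : ℂ, x = ζ • v) → x = 0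
  · refine ⟨0, Λ.zero_mem, ⟨0, by simp⟩, ?_⟩
    ext x
    simp only [Set.mem_setOf_eq, Set.mem_range, smul_zero]
    constructor
    · rintro ⟨h1, h2⟩
      exact ⟨0, (htriv x h1 h2).symm⟩
    · rintro ⟨n, rfl⟩
      exact ⟨Λ.zero_mem, 0, by simp⟩
  · push_neg at htriv
    obtain ⟨x₀, hx₀Λ, ⟨ζ₀, hζ₀⟩, hx₀ne⟩ := htriv
    have hζ₀ne : ζ₀ ≠ 0 := by
      rintro rfl; exact hx₀ne (by simp [hζ₀])
    subst hΛ
    obtain ⟨a₁, a₂, a₃, a₄, hxrep⟩ := rep4 _ _ _ _ x₀ hx₀Λ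
    have hx1 : x₀.1 = (a₁:ℂ) + a₄*(r:ℂ) + a₃*(r:ℂ)^3*I := by
      rw [hxrep]
      simp only [Prod.fst_add, Prod.smul_fst]
      simp only [zsmul_eq_mul]
      push_cast; ring
    have hx2 : x₀.2 = (a₂:ℂ) + a₃*(r:ℂ) + a₄*I := by
      rw [hxrep]
      simp only [Prod.snd_add, Prod.smul_snd]
      simp only [zsmul_eq_mul]
      push_cast; ring
    -- choose a fixed nonzero coordinate t of a
    have hane : ¬(a₁ = 0 ∧ a₂ = 0 ∧ a₃ = 0 ∧ a₄ = 0) := by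
      rintro ⟨rfl, rfl, rfl, rfl⟩
      exact hx₀ne (by simp [hxrep])
    obtain ⟨t, ht0, hts⟩ : ∃ t : ℤ, t ≠ 0 ∧ ∀ b₁ b₂ b₃ b₄ : ℤ,
        a₁*b₂ = a₂*b₁ → a₁*b₃ = a₃*b₁ → a₁*b₄ = a₄*b₁ → a₂*b₃ = a₃*b₂ →
        a₂*b₄ = a₄*b₂ → a₃*b₄ = a₄*b₃ →
        ∃ s : ℤ, t*b₁ = s*a₁ ∧ t*b₂ = s*a₂ ∧ t*b₃ = s*a₃ ∧ t*b₄ = s*a₄ := by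
      by_cases h1 : a₁ ≠ 0
      · exact ⟨a₁, h1, fun b₁ b₂ b₃ b₄ e12 e13 e14 e23 e24 e34 =>
          ⟨b₁, by ring, by linear_combination e12, by linear_combination e13,
            by linear_combination e14⟩⟩
      by_cases h2 : a₂ ≠ 0
      · exact ⟨a₂, h2, fun b₁ b₂ b₃ b₄ e12 e13 e14 e23 e24 e34 =>
          ⟨b₂, by linear_combination -e12, by ring, by linear_combination e23,
            by linear_combination e24⟩⟩
      by_cases h3 : a₃ ≠ 0
      · exact ⟨a₃, h3, fun b₁ b₂ b₃ b₄ e12 e13 e14 e23 e24 e34 =>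
          ⟨b₃, by linear_combination -e13, by linear_combination -e23, by ring,
            by linear_combination e34⟩⟩
      by_cases h4 : a₄ ≠ 0
      · exact ⟨a₄, h4, fun b₁ b₂ b₃ b₄ e12 e13 e14 e23 e24 e34 =>
          ⟨b₄, by linear_combination -e14, by linear_combination -e24,
            by linear_combination -e34, by ring⟩⟩
      push_neg at h1 h2 h3 h4
      exact absurd ⟨h1, h2, h3, h4⟩ hane
    have htC : (t:ℂ) ≠ 0 := Int.cast_ne_zero.mpr ht0
    set G := AddSubgroup.closure
      {((1 : ℂ), (0 : ℂ)), ((0 : ℂ), (1 : ℂ)),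
       ((I * (r : ℂ) ^ 3, (r : ℂ))), (((r : ℂ), I))} with hG
    -- the key divisibility lemma
    have key : ∀ y : ℂ × ℂ, y ∈ G → (∃ ζ : ℂ, y = ζ • x₀) →
        ∃ s : ℤ, (t:ℂ) • y = (s:ℂ) • x₀ := by
      rintro y hyΛ ⟨ζ, hζ⟩
      obtain ⟨b₁, b₂, b₃, b₄, hyrep⟩ := rep4 _ _ _ _ y hyΛ
      have hy1 : y.1 = (b₁:ℂ) + b₄*(r:ℂ) + b₃*(r:ℂ)^3*I := by
        rw [hyrep]
        simp only [Prod.fst_add, Prod.smul_fst]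
        simp only [zsmul_eq_mul]
        push_cast; ring
      have hy2 : y.2 = (b₂:ℂ) + b₃*(r:ℂ) + b₄*I := by
        rw [hyrep]
        simp only [Prod.snd_add, Prod.smul_snd]
        simp only [zsmul_eq_mul]
        push_cast; ring
      have hcross : y.1 * x₀.2 - y.2 * x₀.1 = 0 := by
        rw [hζ]
        simp only [Prod.smul_fst, Prod.smul_snd, smul_eq_mul]
        ring
      rw [hx1, hx2, hy1, hy2] at hcross
      obtain ⟨e12, e13, e14, e23, e24, e34⟩ :=
        cross_minors r hind a₁ a₂ a₃ a₄ b₁ b₂ b₃ b₄ (by linear_combination hcross)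
      obtain ⟨s, hs1, hs2, hs3, hs4⟩ := hts b₁ b₂ b₃ b₄ e12 e13 e14 e23 e24 e34
      refine ⟨s, ?_⟩
      have hz : (t:ℤ) • y = (s:ℤ) • x₀ := by
        rw [hxrep, hyrep]
        simp only [smul_add, smul_smul, hs1, hs2, hs3, hs4]
      rw [Int.cast_smul_eq_zsmul, Int.cast_smul_eq_zsmul]
      exact hz
    -- the comap subgroup of ℤ
    set f : ℤ →+ ℂ × ℂ :=
      { toFun := fun s => ((s:ℂ)/(t:ℂ)) • x₀
        map_zero' := by simp
        map_add' := fun m n => by push_cast; rw [add_div, add_smul] } with hf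
    have hfs : ∀ s : ℤ, f s = ((s:ℂ)/(t:ℂ)) • x₀ := fun s => rfl
    obtain ⟨m, hm⟩ := Int.subgroup_cyclic (G.comap f)
    have hmmem : (m : ℤ) ∈ G.comap f := hm ▸ AddSubgroup.subset_closure rfl
    have hfmG : f m ∈ G := AddSubgroup.mem_comap.mp hmmem
    refine ⟨f m, hfmG, ?_, ?_⟩
    · exact ⟨(m:ℂ)/(t:ℂ)*ζ₀, by rw [hfs, hζ₀, smul_smul]⟩
    · ext x
      simp only [Set.mem_setOf_eq, Set.mem_range]
      constructor
      · rintro ⟨hxΛ, ζ, hxv⟩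
        have hxx : ∃ ζ' : ℂ, x = ζ' • x₀ :=
          ⟨ζ * ζ₀⁻¹, by
            rw [hxv, hζ₀, smul_smul, mul_assoc, inv_mul_cancel₀ hζ₀ne, mul_one]⟩
        obtain ⟨s, hs⟩ := key x hxΛ hxx
        have hxf : x = f s := by
          rw [hfs, div_eq_mul_inv, mul_comm, mul_smul, ← hs, ← mul_smul,
            inv_mul_cancel₀ htC, one_smul]
        have hsT : s ∈ G.comap f := AddSubgroup.mem_comap.mpr (by rw [← hxf]; exact hxΛ)
        rw [hm, AddSubgroup.mem_closure_singleton] at hsT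
        obtain ⟨n, hn⟩ := hsT
        exact ⟨n, by rw [← f.map_zsmul n m, hn, ← hxf]⟩
      · rintro ⟨n, rfl⟩
        constructor
        · exact AddSubgroup.zsmul_mem _ hfmG n
        · refine ⟨(n:ℂ) * ((m:ℂ)/(t:ℂ)*ζ₀), ?_⟩
          rw [← Int.cast_smul_eq_zsmul ℂ n (f m), hfs, hζ₀, smul_smul, smul_smul]
          ring_nf
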